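/- Fix d ≥ 1. Let e, σ : ℝ → ℝ and let V₀ = (ρ₀, v₀, p₀) with ρ₀ > 0, p₀ > 0, v₀ ∈ ℝ^d, ‖v₀‖ < 1; put θ₀ = p₀/ρ₀ and assume e and σ are differentiable at θ₀ with σ′(θ₀) = e′(θ₀)/θ₀. On primitive states V = (ρ, v, p) with ρ > 0, p > 0, ‖v‖ < 1, define θ = p/ρ, γ = 1/√(1−‖v‖²), h = 1 + e(θ) + θ, S = −ln ρ + σ(θ), the conservative-variable map U(V) = (ργ, ρhγ²v, ρhγ² − p) ∈ ℝ^{d+2}, and the entropy η(V) = −ργS. Then the Fréchet derivatives at V₀ satisfy Dη(V₀)[u] = ⟨W(V₀), DU(V₀)[u]⟩ for every tangent vector u ∈ ℝ^{d+2}, where W(V) = θ⁻¹(h − θS, γv₁,…,γv_d, −γ); that is, W is the gradient of the entropy η with respect to the conservative variables U. -/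

import Mathlib

noncomputable section

/-- The primitive state space `(ρ, v, p) ∈ ℝ × ℝ^d × ℝ ≅ ℝ^{d+2}`. -/
abbrev Prim (d : ℕ) := ℝ × (Fin d → ℝ) × ℝ

/-- `θ = p/ρ`. -/
def thetaFun {d : ℕ} (V : Prim d) : ℝ := V.2.2 / V.1

/-- Lorentz factor `γ = 1/√(1 − ‖v‖²)`. -/
def gammaFun {d : ℕ} (V : Prim d) : ℝ := 1 / Real.sqrt (1 - ∑ j, V.2.1 j ^ 2)

/-- The entropy variables `W = θ⁻¹(h − θS, γv, −γ)` are the gradient of the entropy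
`η = −ργS` with respect to the conservative variables `U = (ργ, ρhγ²v, ρhγ² − p)`:
the Fréchet derivatives at `V₀` satisfy `Dη(V₀)[u] = ⟨W(V₀), DU(V₀)[u]⟩` for all `u`. -/
theorem stmt1 (d : ℕ) (hd : 1 ≤ d) (e σ : ℝ → ℝ) (V₀ : Prim d)
    (hρ : 0 < V₀.1) (hp : 0 < V₀.2.2) (hv : ∑ j, V₀.2.1 j ^ 2 < 1)
    (he : DifferentiableAt ℝ e (thetaFun V₀))
    (hσ : HasDerivAt σ (deriv e (thetaFun V₀) / thetaFun V₀) (thetaFun V₀)) :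
    let hFun : Prim d → ℝ := fun V => 1 + e (thetaFun V) + thetaFun V
    let SFun : Prim d → ℝ := fun V => -Real.log V.1 + σ (thetaFun V)
    let Umap : Prim d → ℝ × (Fin d → ℝ) × ℝ := fun V =>
      (V.1 * gammaFun V,
       fun j => V.1 * hFun V * gammaFun V ^ 2 * V.2.1 j,
       V.1 * hFun V * gammaFun V ^ 2 - V.2.2)
    let η : Prim d → ℝ := fun V => -(V.1 * gammaFun V * SFun V)
    let W₁ : ℝ := (thetaFun V₀)⁻¹ * (hFun V₀ - thetaFun V₀ * SFun V₀)
    let Wm : Fin d → ℝ := fun j => (thetaFun V₀)⁻¹ * (gammaFun V₀ * V₀.2.1 j)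
    let Wl : ℝ := (thetaFun V₀)⁻¹ * (-gammaFun V₀)
    DifferentiableAt ℝ η V₀ ∧ DifferentiableAt ℝ Umap V₀ ∧
      ∀ u : Prim d,
        fderiv ℝ η V₀ u =
          W₁ * (fderiv ℝ Umap V₀ u).1 + (∑ j, Wm j * (fderiv ℝ Umap V₀ u).2.1 j)
            + Wl * (fderiv ℝ Umap V₀ u).2.2 := by
  intro hFun SFun Umap η W₁ Wm Wl
  have hρne : V₀.1 ≠ 0 := hρ.ne'
  have hq0 : (0:ℝ) ≤ ∑ j, V₀.2.1 j ^ 2 := Finset.sum_nonneg fun j _ => sq_nonneg _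
  have h1q : (0:ℝ) < 1 - ∑ j, V₀.2.1 j ^ 2 := by linarith
  have hsq : 0 < Real.sqrt (1 - ∑ j, V₀.2.1 j ^ 2) := Real.sqrt_pos.mpr h1q
  have hsqne : Real.sqrt (1 - ∑ j, V₀.2.1 j ^ 2) ≠ 0 := hsq.ne'
  -- multivariate differentiability
  have hFst : DifferentiableAt ℝ (fun V : Prim d => V.1) V₀ := differentiableAt_fst
  have hP : DifferentiableAt ℝ (fun V : Prim d => V.2.2) V₀ := differentiableAt_snd.snd
  have hVj : ∀ j, DifferentiableAt ℝ (fun V : Prim d => V.2.1 j) V₀ := by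
    intro j
    exact ((ContinuousLinearMap.proj j : (Fin d → ℝ) →L[ℝ] ℝ).differentiableAt).comp V₀
      differentiableAt_snd.fst
  have hθ : DifferentiableAt ℝ (fun V : Prim d => thetaFun V) V₀ := by
    simp only [thetaFun, div_eq_mul_inv]; exact hP.mul (hFst.inv hρne)
  have hQ : DifferentiableAt ℝ (fun V : Prim d => ∑ j, V.2.1 j ^ 2) V₀ :=
    DifferentiableAt.fun_sum fun j _ => (hVj j).pow 2
  have hγ : DifferentiableAt ℝ (fun V : Prim d => gammaFun V) V₀ := by
    simp only [gammaFun, one_div]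
    exact (((differentiableAt_const 1).sub hQ).sqrt h1q.ne').inv hsqne
  have hH : DifferentiableAt ℝ hFun V₀ :=
    ((differentiableAt_const 1).add (he.comp V₀ hθ)).add hθ
  have hS : DifferentiableAt ℝ SFun V₀ :=
    ((hFst.log hρne).neg).add (hσ.differentiableAt.comp V₀ hθ)
  have hEta : DifferentiableAt ℝ η V₀ := ((hFst.mul hγ).mul hS).neg
  have hU1 : DifferentiableAt ℝ (fun V : Prim d => V.1 * gammaFun V) V₀ := hFst.mul hγ
  have hU2j : ∀ j, DifferentiableAt ℝ
      (fun V : Prim d => V.1 * hFun V * gammaFun V ^ 2 * V.2.1 j) V₀ :=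
    fun j => ((hFst.mul hH).mul (hγ.pow 2)).mul (hVj j)
  have hU2 : DifferentiableAt ℝ
      (fun V : Prim d => (fun j => V.1 * hFun V * gammaFun V ^ 2 * V.2.1 j)) V₀ :=
    differentiableAt_pi.mpr hU2j
  have hU3 : DifferentiableAt ℝ
      (fun V : Prim d => V.1 * hFun V * gammaFun V ^ 2 - V.2.2) V₀ :=
    ((hFst.mul hH).mul (hγ.pow 2)).sub hP
  have hU : DifferentiableAt ℝ Umap V₀ := hU1.prodMk (hU2.prodMk hU3)
  refine ⟨hEta, hU, ?_⟩
  intro u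
  -- decompose the derivative of Umap
  have hUf : fderiv ℝ Umap V₀ =
      (fderiv ℝ (fun V : Prim d => V.1 * gammaFun V) V₀).prod
        ((fderiv ℝ (fun V : Prim d =>
            (fun j => V.1 * hFun V * gammaFun V ^ 2 * V.2.1 j)) V₀).prod
          (fderiv ℝ (fun V : Prim d => V.1 * hFun V * gammaFun V ^ 2 - V.2.2) V₀)) :=
    (hU1.hasFDerivAt.prodMk (hU2.hasFDerivAt.prodMk hU3.hasFDerivAt)).fderiv
  have hU2f : fderiv ℝ (fun V : Prim d =>
      (fun j => V.1 * hFun V * gammaFun V ^ 2 * V.2.1 j)) V₀ =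
      ContinuousLinearMap.pi (fun j => fderiv ℝ
        (fun V : Prim d => V.1 * hFun V * gammaFun V ^ 2 * V.2.1 j) V₀) :=
    fderiv_pi hU2j
  rw [hUf, hU2f]
  simp only [ContinuousLinearMap.prod_apply, ContinuousLinearMap.pi_apply]
  -- directional derivatives along the line t ↦ V₀ + t • u
  have key : ∀ (f : Prim d → ℝ) (D : ℝ), DifferentiableAt ℝ f V₀ →
      HasDerivAt (fun t : ℝ => f (V₀ + t • u)) D 0 → fderiv ℝ f V₀ u = D := by
    intro f D hf hD
    have hline : HasDerivAt (fun t : ℝ => V₀ + t • u) u 0 := by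
      simpa using ((hasDerivAt_id (0:ℝ)).smul_const u).const_add V₀
    have h1 : HasDerivAt (fun t : ℝ => f (V₀ + t • u)) (fderiv ℝ f V₀ u) 0 := by
      have h2 := hf.hasFDerivAt.comp_hasDerivAt_of_eq (x := 0) hline (by simp)
      exact h2
    exact h1.unique hD
  -- one-dimensional derivatives
  have hA : HasDerivAt (fun t : ℝ => V₀.1 + t * u.1) u.1 0 := by
    simpa using ((hasDerivAt_id (0:ℝ)).mul_const u.1).const_add V₀.1
  have hB : HasDerivAt (fun t : ℝ => V₀.2.2 + t * u.2.2) u.2.2 0 := by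
    simpa using ((hasDerivAt_id (0:ℝ)).mul_const u.2.2).const_add V₀.2.2
  have hWj : ∀ j, HasDerivAt (fun t : ℝ => V₀.2.1 j + t * u.2.1 j) (u.2.1 j) 0 := fun j => by
    simpa using ((hasDerivAt_id (0:ℝ)).mul_const (u.2.1 j)).const_add (V₀.2.1 j)
  have hRne0 : V₀.1 + 0 * u.1 ≠ 0 := by simpa using hρne
  have hθt : HasDerivAt (fun t : ℝ => (V₀.2.2 + t * u.2.2) / (V₀.1 + t * u.1))
      ((u.2.2 * V₀.1 - V₀.2.2 * u.1) / V₀.1 ^ 2) 0 := by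
    have h := hB.div hA hRne0
    refine h.congr_deriv ?_
    symm
    simp
  have hqt : HasDerivAt (fun t : ℝ => ∑ j, (V₀.2.1 j + t * u.2.1 j) ^ 2)
      (2 * ∑ j, V₀.2.1 j * u.2.1 j) 0 := by
    have h := HasDerivAt.fun_sum (u := Finset.univ) fun j _ => ((hWj j).pow 2)
    refine h.congr_deriv ?_
    symm
    rw [Finset.mul_sum]
    refine Finset.sum_congr rfl fun j _ => ?_
    push_cast
    ring
  have hone : HasDerivAt (fun t : ℝ => 1 - ∑ j, (V₀.2.1 j + t * u.2.1 j) ^ 2)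
      (-(2 * ∑ j, V₀.2.1 j * u.2.1 j)) 0 := hqt.const_sub 1
  have hinne : (1:ℝ) - ∑ j, (V₀.2.1 j + 0 * u.2.1 j) ^ 2 ≠ 0 := by simpa using h1q.ne'
  have hsq0 : Real.sqrt (1 - ∑ j, (V₀.2.1 j + 0 * u.2.1 j) ^ 2) ≠ 0 := by simpa using hsqne
  have hγt : HasDerivAt (fun t : ℝ => 1 / Real.sqrt (1 - ∑ j, (V₀.2.1 j + t * u.2.1 j) ^ 2))
      ((∑ j, V₀.2.1 j * u.2.1 j) / Real.sqrt (1 - ∑ j, V₀.2.1 j ^ 2) ^ 3) 0 := by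
    have h := (hasDerivAt_const (0:ℝ) (1:ℝ)).div (hone.sqrt hinne) hsq0
    refine h.congr_deriv ?_
    symm
    have h2 : Real.sqrt (1 - ∑ j, (V₀.2.1 j + 0 * u.2.1 j) ^ 2)
        = Real.sqrt (1 - ∑ j, V₀.2.1 j ^ 2) := by norm_num
    rw [h2]
    field_simp [hsqne]
    ring
  have hθ0 : thetaFun V₀ = (V₀.2.2 + 0 * u.2.2) / (V₀.1 + 0 * u.1) := by
    simp [thetaFun]
  have het : HasDerivAt (fun t : ℝ => e ((V₀.2.2 + t * u.2.2) / (V₀.1 + t * u.1)))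
      (deriv e (thetaFun V₀) * ((u.2.2 * V₀.1 - V₀.2.2 * u.1) / V₀.1 ^ 2)) 0 := by
    have h := HasDerivAt.comp (h₂ := e) 0 (hθ0 ▸ he.hasDerivAt) hθt
    refine h.congr_deriv ?_
    simp [thetaFun]
  have hσt : HasDerivAt (fun t : ℝ => σ ((V₀.2.2 + t * u.2.2) / (V₀.1 + t * u.1)))
      ((deriv e (thetaFun V₀) / thetaFun V₀) * ((u.2.2 * V₀.1 - V₀.2.2 * u.1) / V₀.1 ^ 2)) 0 := by
    have h := HasDerivAt.comp (h₂ := σ) 0 (hθ0 ▸ hσ) hθt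
    refine h.congr_deriv ?_
    simp [thetaFun]
  have hlogt : HasDerivAt (fun t : ℝ => Real.log (V₀.1 + t * u.1)) (u.1 / V₀.1) 0 := by
    have h := hA.log hRne0
    simpa using h
  have hSt := (hlogt.neg).add hσt
  have hht := (het.const_add 1).add hθt
  have hηt := ((hA.mul hγt).mul hSt).neg
  have hU1t := hA.mul hγt
  have hU2t := fun j => (((hA.mul hht).mul (hγt.pow 2)).mul (hWj j))
  have hU3t := ((hA.mul hht).mul (hγt.pow 2)).sub hB
  rw [key _ _ hEta hηt, key _ _ hU1 hU1t, key _ _ hU3 hU3t]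
  have hrw2 : ∀ j, fderiv ℝ (fun V : Prim d =>
      V.1 * hFun V * gammaFun V ^ 2 * V.2.1 j) V₀ u = _ := fun j => key _ _ (hU2j j) (hU2t j)
  simp only [hrw2]
  have hsum : ∀ K C : ℝ, (∑ j, Wm j * (K * V₀.2.1 j + C * u.2.1 j)) =
      (thetaFun V₀)⁻¹ * gammaFun V₀ * K * (∑ j, V₀.2.1 j ^ 2)
        + (thetaFun V₀)⁻¹ * gammaFun V₀ * C * (∑ j, V₀.2.1 j * u.2.1 j) := by
    intro K C
    simp only [Wm]
    rw [Finset.mul_sum, Finset.mul_sum, ← Finset.sum_add_distrib]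
    exact Finset.sum_congr rfl fun j _ => by ring
  norm_num
  rw [hsum]
  simp only [W₁, Wl, hFun, SFun, thetaFun, gammaFun, one_div]
  have h3 := Real.sq_sqrt h1q.le
  set SQ := Real.sqrt (1 - ∑ j, V₀.2.1 j ^ 2) with hSQdef
  rw [show (∑ j, V₀.2.1 j ^ 2) = 1 - SQ ^ 2 by linarith]
  field_simp
  ring
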